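/- For every 1 ≤ k ≤ dim E there exists a constant c > 1 such that for all k-dimensional subspaces U, V ⊆ E one has (1/c) ‖P_U − P_V‖ ≤ δ(U,V) ≤ c ‖P_U − P_V‖. -/

import Mathlib

open Module Submodule RealInnerProductSpace

noncomputable section

variable {E : Type*} [NormedAddCommGroup E] [InnerProductSpace ℝ E] [FiniteDimensional ℝ E]

/-- The orthogonal projection onto a subspace `U`, viewed as a continuous linear
endomorphism of `E`. -/
noncomputable def projCLM (U : Submodule ℝ E) : E →L[ℝ] E :=
  U.subtypeL.comp (orthogonalProjection U)

/-- The gap `δ(U,V) := ‖P_U - P_V ∘ P_U‖` between two subspaces. -/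
noncomputable def gap (U V : Submodule ℝ E) : ℝ :=
  ‖projCLM U - (projCLM V).comp (projCLM U)‖

lemma projCLM_apply (U : Submodule ℝ E) (x : E) :
    projCLM U x = (orthogonalProjection U x : E) := rfl

lemma projCLM_mem (U : Submodule ℝ E) (x : E) : projCLM U x ∈ U :=
  (orthogonalProjection U x).2

lemma projCLM_eq_self (U : Submodule ℝ E) {x : E} (hx : x ∈ U) : projCLM U x = x :=
  starProjection_eq_self_iff.mpr hx

lemma sub_projCLM_mem_orthogonal (U : Submodule ℝ E) (x : E) : x - projCLM U x ∈ Uᗮ :=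
  sub_starProjection_mem_orthogonal x

lemma projCLM_pythag (U : Submodule ℝ E) (x : E) :
    ‖x‖ ^ 2 = ‖projCLM U x‖ ^ 2 + ‖x - projCLM U x‖ ^ 2 := by
  have h0 : (inner ℝ (projCLM U x) (x - projCLM U x) : ℝ) = 0 :=
    Submodule.inner_right_of_mem_orthogonal (projCLM_mem U x) (sub_projCLM_mem_orthogonal U x)
  have := norm_add_sq_real (projCLM U x) (x - projCLM U x)
  rw [h0] at this
  simpa using this

lemma norm_projCLM_le (U : Submodule ℝ E) (x : E) : ‖projCLM U x‖ ≤ ‖x‖ := by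
  have := projCLM_pythag U x
  nlinarith [norm_nonneg (projCLM U x), norm_nonneg x, sq_nonneg ‖x - projCLM U x‖]

lemma norm_sub_projCLM_le (U : Submodule ℝ E) (x : E) : ‖x - projCLM U x‖ ≤ ‖x‖ := by
  have := projCLM_pythag U x
  nlinarith [norm_nonneg (x - projCLM U x), norm_nonneg x, sq_nonneg ‖projCLM U x‖]

lemma projCLM_minimal (U : Submodule ℝ E) (x : E) {u : E} (hu : u ∈ U) :
    ‖x - projCLM U x‖ ≤ ‖x - u‖ := by
  have h0 : (inner ℝ (x - projCLM U x) (projCLM U x - u) : ℝ) = 0 :=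
    Submodule.inner_left_of_mem_orthogonal (U.sub_mem (projCLM_mem U x) hu)
      (sub_projCLM_mem_orthogonal U x)
  have hdecomp : x - u = (x - projCLM U x) + (projCLM U x - u) := by abel
  have := norm_add_sq_real (x - projCLM U x) (projCLM U x - u)
  rw [h0, ← hdecomp] at this
  nlinarith [norm_nonneg (x - projCLM U x), norm_nonneg (x - u), sq_nonneg ‖projCLM U x - u‖]

lemma gap_nonneg (U V : Submodule ℝ E) : 0 ≤ gap U V := norm_nonneg _

lemma pointwise_gap (U V : Submodule ℝ E) (x : E) :
    ‖projCLM U x - projCLM V (projCLM U x)‖ ≤ gap U V * ‖x‖ := by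
  have := (projCLM U - (projCLM V).comp (projCLM U)).le_opNorm x
  simpa [gap] using this

lemma gap_le_one (U V : Submodule ℝ E) : gap U V ≤ 1 := by
  rw [gap]
  refine ContinuousLinearMap.opNorm_le_bound _ zero_le_one fun x => ?_
  have h1 : ‖projCLM U x - projCLM V (projCLM U x)‖ ≤ ‖projCLM U x‖ :=
    norm_sub_projCLM_le V (projCLM U x)
  have h2 := norm_projCLM_le U x
  simp only [ContinuousLinearMap.sub_apply, ContinuousLinearMap.comp_apply, one_mul]
  exact h1.trans h2

lemma gap_le_dist (U V : Submodule ℝ E) : gap U V ≤ ‖projCLM U - projCLM V‖ := by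
  rw [gap]
  refine ContinuousLinearMap.opNorm_le_bound _ (norm_nonneg _) fun x => ?_
  set y := projCLM U x - projCLM V x with hy
  have key : projCLM U x - projCLM V (projCLM U x) = y - projCLM V y := by
    have hVV : projCLM V (projCLM V x) = projCLM V x := projCLM_eq_self V (projCLM_mem V x)
    simp only [hy, map_sub, hVV]
    abel
  rw [ContinuousLinearMap.sub_apply, ContinuousLinearMap.comp_apply, key]
  calc ‖y - projCLM V y‖ ≤ ‖y‖ := norm_sub_projCLM_le V y
    _ ≤ ‖projCLM U - projCLM V‖ * ‖x‖ := by
        have := (projCLM U - projCLM V).le_opNorm x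
        simpa [hy] using this

/-- If `P_U w = 0` then `‖P_V w‖ ≤ gap V U * ‖w‖`. -/
lemma norm_projCLM_le_gap (U V : Submodule ℝ E) {w : E} (hw : projCLM U w = 0) :
    ‖projCLM V w‖ ≤ gap V U * ‖w‖ := by
  set v := projCLM V w with hv
  have hvV : v ∈ V := projCLM_mem V w
  have hvv : projCLM V v = v := projCLM_eq_self V hvV
  have h1 : (inner ℝ v w : ℝ) = ‖v‖ ^ 2 := by
    have h0 : (inner ℝ v (w - v) : ℝ) = 0 :=
      Submodule.inner_right_of_mem_orthogonal hvV (sub_projCLM_mem_orthogonal V w)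
    have hsub : (inner ℝ v (w - v) : ℝ) = (inner ℝ v w : ℝ) - (inner ℝ v v : ℝ) := by
      rw [inner_sub_right]
    rw [h0] at hsub
    have h2 : (inner ℝ v w : ℝ) = (inner ℝ v v : ℝ) := by linarith
    rw [h2, real_inner_self_eq_norm_sq]
  have h2 : (inner ℝ (projCLM U v) w : ℝ) = 0 := by
    change inner ℝ (U.starProjection v) w = 0
    rw [inner_starProjection_left_eq_right]
    change inner ℝ v (projCLM U w) = 0
    rw [hw, inner_zero_right]
  have h3 : ‖v‖ ^ 2 = (inner ℝ (v - projCLM U v) w : ℝ) := by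
    rw [inner_sub_left, h2, sub_zero, h1]
  have h4 : ‖v - projCLM U v‖ ≤ gap V U * ‖v‖ := by
    have := pointwise_gap V U v
    rwa [hvv] at this
  have h5 : (inner ℝ (v - projCLM U v) w : ℝ) ≤ ‖v - projCLM U v‖ * ‖w‖ :=
    real_inner_le_norm _ _
  rcases eq_or_ne v 0 with h | h
  · rw [h, norm_zero]
    exact mul_nonneg (gap_nonneg V U) (norm_nonneg w)
  · have hvpos : 0 < ‖v‖ := norm_pos_iff.mpr h
    have : ‖v‖ ^ 2 ≤ gap V U * ‖v‖ * ‖w‖ := by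
      calc ‖v‖ ^ 2 = (inner ℝ (v - projCLM U v) w : ℝ) := h3
        _ ≤ ‖v - projCLM U v‖ * ‖w‖ := h5
        _ ≤ gap V U * ‖v‖ * ‖w‖ := mul_le_mul_of_nonneg_right h4 (norm_nonneg w)
    nlinarith

lemma dist_le_gap_add_gap (U V : Submodule ℝ E) :
    ‖projCLM U - projCLM V‖ ≤ gap U V + gap V U := by
  refine ContinuousLinearMap.opNorm_le_bound _ (add_nonneg (gap_nonneg U V) (gap_nonneg V U)) fun x => ?_
  set w := x - projCLM U x with hw
  have hPUw : projCLM U w = 0 := by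
    simp only [hw, map_sub, projCLM_eq_self U (projCLM_mem U x), sub_self]
  have hsplit : projCLM U x - projCLM V x =
      (projCLM U x - projCLM V (projCLM U x)) - projCLM V w := by
    simp only [hw, map_sub]; abel
  rw [ContinuousLinearMap.sub_apply, hsplit]
  calc ‖(projCLM U x - projCLM V (projCLM U x)) - projCLM V w‖
      ≤ ‖projCLM U x - projCLM V (projCLM U x)‖ + ‖projCLM V w‖ := norm_sub_le _ _
    _ ≤ gap U V * ‖x‖ + gap V U * ‖w‖ :=
        add_le_add (pointwise_gap U V x) (norm_projCLM_le_gap U V hPUw)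
    _ ≤ gap U V * ‖x‖ + gap V U * ‖x‖ := by
        have := norm_sub_projCLM_le U x
        have := gap_nonneg V U
        nlinarith
    _ = (gap U V + gap V U) * ‖x‖ := by ring

lemma gap_symm_le (U V : Submodule ℝ E) (hUV : finrank ℝ U = finrank ℝ V) :
    gap V U ≤ 2 * gap U V := by
  set d := gap U V with hd
  clear_value d
  by_cases hcase : (1:ℝ)/2 ≤ d
  · have := gap_le_one V U
    linarith
  · push_neg at hcase
    have hd0 : 0 ≤ d := hd ▸ gap_nonneg U V
    -- f : U →ₗ V , projection onto V restricted to U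
    set f : U →ₗ[ℝ] V := (orthogonalProjection V).toLinearMap.comp U.subtype with hf
    have hfu : ∀ u : U, ((f u : E)) = projCLM V (u : E) := fun u => rfl
    have hinj : Function.Injective f := by
      rw [← LinearMap.ker_eq_bot, LinearMap.ker_eq_bot']
      intro u hu
      have h0 : projCLM V (u : E) = 0 := by
        rw [← hfu, hu]; simp
      have h1 : ‖(u:E) - projCLM V (u:E)‖ ≤ d * ‖(u:E)‖ := by
        have := pointwise_gap U V (u : E)
        rw [projCLM_eq_self U u.2, ← hd] at this
        exact this
      rw [h0, sub_zero] at h1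
      have : ‖(u:E)‖ = 0 := by nlinarith [norm_nonneg (u:E)]
      exact Subtype.ext (norm_eq_zero.mp this)
    have hsurj : Function.Surjective f :=
      (LinearMap.injective_iff_surjective_of_finrank_eq_finrank hUV).mp hinj
    rw [gap]
    refine ContinuousLinearMap.opNorm_le_bound _ (by linarith) fun x => ?_
    simp only [ContinuousLinearMap.sub_apply, ContinuousLinearMap.comp_apply]
    set v := projCLM V x with hv
    clear_value v
    obtain ⟨u, hu⟩ := hsurj (orthogonalProjection V x)
    have huv : projCLM V (u : E) = v := by
      rw [← hfu, hu]; exact hv.symm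
    -- bound ‖u‖
    have h1 : ‖(u:E) - projCLM V (u:E)‖ ≤ d * ‖(u:E)‖ := by
      have := pointwise_gap U V (u : E)
      rw [projCLM_eq_self U u.2, ← hd] at this
      exact this
    have h1' : ‖(u:E) - v‖ ≤ d * ‖(u:E)‖ := by rw [← huv]; exact h1
    have h2 : ‖(u:E)‖ ≤ ‖v‖ + d * ‖(u:E)‖ := by
      have he : v + ((u:E) - v) = (u:E) := by abel
      have := norm_add_le v ((u:E) - v)
      rw [he] at this
      linarith
    have hprod : d * ‖(u:E)‖ ≤ (1/2) * ‖(u:E)‖ :=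
      mul_le_mul_of_nonneg_right (le_of_lt hcase) (norm_nonneg _)
    have hnu : ‖(u:E)‖ ≤ 2 * ‖v‖ := by linarith
    have h3 : ‖v - projCLM U v‖ ≤ ‖v - (u:E)‖ := projCLM_minimal U v u.2
    have h4 : ‖v - (u:E)‖ = ‖(u:E) - projCLM V (u:E)‖ := by rw [← huv, norm_sub_rev]
    have h5 : ‖v‖ ≤ ‖x‖ := hv ▸ norm_projCLM_le V x
    calc ‖v - projCLM U v‖ ≤ ‖(u:E) - projCLM V (u:E)‖ := by rw [← h4]; exact h3
      _ ≤ d * ‖(u:E)‖ := h1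
      _ ≤ d * (2 * ‖v‖) := mul_le_mul_of_nonneg_left hnu hd0
      _ ≤ 2 * d * ‖x‖ := by have := mul_le_mul_of_nonneg_left h5 hd0; linarith

/-- For every `1 ≤ k ≤ dim E` there is a constant `c > 1` such that for all
`k`-dimensional subspaces `U, V ⊆ E`,
`(1/c) ‖P_U − P_V‖ ≤ δ(U,V) ≤ c ‖P_U − P_V‖. -/
theorem gap_comparable_dist (k : ℕ) (hk1 : 1 ≤ k) (hk2 : k ≤ finrank ℝ E) :
    ∃ c : ℝ, 1 < c ∧
      ∀ U V : Submodule ℝ E, finrank ℝ U = k → finrank ℝ V = k →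
        (1 / c) * ‖projCLM U - projCLM V‖ ≤ gap U V ∧
          gap U V ≤ c * ‖projCLM U - projCLM V‖ := by
  refine ⟨3, by norm_num, fun U V hU hV => ?_⟩
  have hUV : finrank ℝ U = finrank ℝ V := by rw [hU, hV]
  have h1 : ‖projCLM U - projCLM V‖ ≤ 3 * gap U V := by
    have := dist_le_gap_add_gap U V
    have := gap_symm_le U V hUV
    linarith
  constructor
  · linarith
  · have h2 := gap_le_dist U V
    have h3 : (0:ℝ) ≤ ‖projCLM U - projCLM V‖ := norm_nonneg _
    linarith
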